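/- Let f be a bounded holomorphic function on the open unit disk 𝔻 with |f(λ)| ≤ 1 for all λ ∈ 𝔻. Then both kernels K₁(λ, z) = (2·conj(f(λ))·f(z) − conj(f(λ))²·f(z)²) / (1 − conj(λ)·z)² and K₂(λ, z) = (1 − 2·conj(f(λ))·f(z) + conj(f(λ))²·f(z)²) / (1 − conj(λ)·z)² are positive semi-definite on 𝔻. -/

import Mathlib

open Complex Metric ComplexOrder

open intervalIntegral

set_option maxHeartbeats 1000000

/-- A kernel `K` on the open unit disk is positive semi-definite if for every finite
family of points in the disk and complex coefficients, the associated quadratic form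
is a nonnegative real number (using the partial order on `ℂ`). -/
def IsPSDKernelOnDisk (K : ℂ → ℂ → ℂ) : Prop :=
  ∀ (n : ℕ) (lam : Fin n → ℂ), (∀ i, ‖lam i‖ < 1) →
    ∀ c : Fin n → ℂ,
      0 ≤ ∑ i, ∑ j, (starRingEnd ℂ) (c i) * c j * K (lam i) (lam j)

lemma exp_ne (θ : ℝ) : Complex.exp (θ * I) ≠ 0 := Complex.exp_ne_zero _

lemma abs_exp_theta (θ : ℝ) : ‖Complex.exp (θ * I)‖ = 1 := by
  simp [Complex.norm_exp]

lemma conj_exp_theta (θ : ℝ) :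
    (starRingEnd ℂ) (Complex.exp (θ * I)) = Complex.exp (-(θ * I)) := by
  rw [← Complex.exp_conj]; congr 1; simp

lemma one_sub_ne {w : ℂ} (h : ‖w‖ < 1) : (1 : ℂ) - w ≠ 0 := by
  intro hw
  have : w = 1 := by linear_combination -hw
  rw [this] at h; simp at h

lemma intervalIntegral_conj {f : ℝ → ℂ} {a b : ℝ} :
    (∫ x in a..b, (starRingEnd ℂ) (f x)) = (starRingEnd ℂ) (∫ x in a..b, f x) := by
  rw [intervalIntegral, intervalIntegral, integral_conj,
    integral_conj, map_sub]

lemma expand {n : ℕ} (k : Fin n → ℝ → ℂ) (hk : ∀ i, Continuous (k i))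
    (G : ℝ → ℂ) (hG : Continuous G) (φ ψ : Fin n → ℂ) :
    (∫ θ in (0:ℝ)..(2*Real.pi), (G θ * ∑ i, φ i * k i θ) *
        (starRingEnd ℂ) (∑ j, ψ j * k j θ))
      = ∑ i, ∑ j, (φ i * (starRingEnd ℂ) (ψ j)) *
          ∫ θ in (0:ℝ)..(2*Real.pi), (G θ * k i θ) * (starRingEnd ℂ) (k j θ) := by
  have hc : ∀ i j : Fin n, Continuous fun θ =>
      (φ i * (starRingEnd ℂ) (ψ j)) * ((G θ * k i θ) * (starRingEnd ℂ) (k j θ)) := by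
    intro i j
    exact continuous_const.mul ((hG.mul (hk i)).mul (Complex.continuous_conj.comp (hk j)))
  have pt : ∀ θ : ℝ, (G θ * ∑ i, φ i * k i θ) * (starRingEnd ℂ) (∑ j, ψ j * k j θ)
      = ∑ i, ∑ j, (φ i * (starRingEnd ℂ) (ψ j)) * ((G θ * k i θ) * (starRingEnd ℂ) (k j θ)) := by
    intro θ
    simp only [map_sum, map_mul, Finset.mul_sum, Finset.sum_mul]
    rw [Finset.sum_comm]
    refine Finset.sum_congr rfl fun i _ => Finset.sum_congr rfl fun j _ => ?_
    ring
  rw [intervalIntegral.integral_congr (g := fun θ => ∑ i, ∑ j,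
      (φ i * (starRingEnd ℂ) (ψ j)) * ((G θ * k i θ) * (starRingEnd ℂ) (k j θ)))
      (fun θ _ => pt θ)]
  rw [intervalIntegral.integral_finset_sum (fun i _ =>
    (Continuous.intervalIntegrable (continuous_finset_sum _ fun j _ => hc i j) _ _))]
  refine Finset.sum_congr rfl fun i _ => ?_
  rw [intervalIntegral.integral_finset_sum (fun j _ =>
    (hc i j).intervalIntegrable _ _)]
  refine Finset.sum_congr rfl fun j _ => ?_
  exact intervalIntegral.integral_const_mul _ _


lemma cauchy_rep {R : ℝ} (hR : 1 < R) {g : ℂ → ℂ} (hg : DifferentiableOn ℂ g (ball 0 R))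
    {μ : ℂ} (hμ : ‖μ‖ < 1) :
    ∫ θ in (0:ℝ)..(2*Real.pi), g (Complex.exp (θ * I)) * (1 - μ * Complex.exp (-(θ * I)))⁻¹
      = 2 * Real.pi * g μ := by
  have hd : DifferentiableOn ℂ g (closedBall 0 1) :=
    hg.mono (closedBall_subset_ball hR)
  have hw : μ ∈ ball (0:ℂ) 1 := by simpa [mem_ball_zero_iff] using hμ
  have key := hd.circleIntegral_sub_inv_smul hw
  rw [circleIntegral] at key
  have hpt : ∀ θ : ℝ,
      g (Complex.exp (θ * I)) * (1 - μ * Complex.exp (-(θ * I)))⁻¹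
        = I⁻¹ * (deriv (circleMap 0 1) θ • ((circleMap 0 1 θ - μ)⁻¹ • g (circleMap 0 1 θ))) := by
    intro θ
    rw [deriv_circleMap]
    have h1 : circleMap 0 1 θ = Complex.exp (θ * I) := by simp [circleMap]
    rw [h1, smul_eq_mul, smul_eq_mul]
    have hsub : Complex.exp (θ * I) - μ ≠ 0 := by
      intro h
      have : Complex.exp (θ * I) = μ := by linear_combination h
      rw [← this] at hμ; rw [abs_exp_theta] at hμ; linarith
    rw [Complex.exp_neg]
    field_simp [exp_ne θ, Complex.I_ne_zero]
  calc ∫ θ in (0:ℝ)..(2*Real.pi), g (Complex.exp (θ * I)) * (1 - μ * Complex.exp (-(θ * I)))⁻¹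
      = ∫ θ in (0:ℝ)..(2*Real.pi), I⁻¹ * (deriv (circleMap 0 1) θ • ((circleMap 0 1 θ - μ)⁻¹ • g (circleMap 0 1 θ))) := by
        exact intervalIntegral.integral_congr (fun θ _ => hpt θ)
    _ = I⁻¹ * ∫ θ in (0:ℝ)..(2*Real.pi), deriv (circleMap 0 1) θ • ((circleMap 0 1 θ - μ)⁻¹ • g (circleMap 0 1 θ)) := by
        rw [intervalIntegral.integral_const_mul]
    _ = I⁻¹ * ((2 * Real.pi * I) • g μ) := by rw [key]
    _ = 2 * Real.pi * g μ := by
        rw [smul_eq_mul]; field_simp [Complex.I_ne_zero]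


lemma lemA {R : ℝ} (hR : 1 < R) {f : ℂ → ℂ} (hf : DifferentiableOn ℂ f (ball 0 R))
    (hle : ∀ z ∈ ball (0:ℂ) R, ‖f z‖ ≤ 1)
    {n : ℕ} (μ : Fin n → ℂ) (hμ : ∀ i, ‖μ i‖ < 1) (c : Fin n → ℂ) :
    0 ≤ ∑ i, ∑ j, (starRingEnd ℂ) (c i) * c j *
      ((1 - (starRingEnd ℂ) (f (μ i)) * f (μ j)) * (1 - (starRingEnd ℂ) (μ i) * μ j)⁻¹) := by
  rcases Nat.eq_zero_or_pos n with hn | hn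
  · subst hn; simp
  haveI : NeZero n := ⟨hn.ne'⟩
  set ρ : ℝ := Finset.univ.sup' Finset.univ_nonempty (fun i => ‖μ i‖) with hρdef
  have hρ1 : ρ < 1 := (Finset.sup'_lt_iff _).mpr fun i _ => hμ i
  have hρi : ∀ i, ‖μ i‖ ≤ ρ := fun i => Finset.le_sup' (fun i => ‖μ i‖) (Finset.mem_univ i)
  have hρ0 : 0 ≤ ρ := le_trans (norm_nonneg _) (hρi ⟨0, hn⟩)
  set R' : ℝ := min R (2/(1+ρ)) with hR'def
  have hR'1 : 1 < R' := lt_min hR ((one_lt_div (by linarith)).mpr (by linarith))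
  have hsmall : ∀ i, ∀ z ∈ ball (0:ℂ) R', ‖(starRingEnd ℂ) (μ i) * z‖ < 1 := by
    intro i z hz
    rw [norm_mul, Complex.norm_conj]
    rw [mem_ball_zero_iff] at hz
    have hz' : ‖z‖ < 2/(1+ρ) := lt_of_lt_of_le hz (min_le_right _ _)
    have h1 : ‖μ i‖ * ‖z‖ ≤ ρ * ‖z‖ :=
      mul_le_mul_of_nonneg_right (hρi i) (norm_nonneg _)
    have h2 : ρ * ‖z‖ ≤ ρ * (2/(1+ρ)) :=
      mul_le_mul_of_nonneg_left hz'.le hρ0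
    have h3 : ρ * (2/(1+ρ)) < 1 := by
      rw [show ρ * (2/(1+ρ)) = 2*ρ/(1+ρ) by ring]
      exact (div_lt_one (by linarith)).mpr (by linarith)
    linarith
  have hkdiff : ∀ i, DifferentiableOn ℂ
      (fun z => ((1:ℂ) - (starRingEnd ℂ) (μ i) * z)⁻¹) (ball 0 R') := by
    intro i
    apply DifferentiableOn.inv
    · exact (differentiableOn_const _).sub ((differentiableOn_const _).mul differentiableOn_id)
    · exact fun z hz => one_sub_ne (hsmall i z hz)
  have hf' : DifferentiableOn ℂ f (ball 0 R') := hf.mono (ball_subset_ball (min_le_left _ _))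
  set k : Fin n → ℝ → ℂ :=
    fun i θ => ((1:ℂ) - (starRingEnd ℂ) (μ i) * Complex.exp (θ * I))⁻¹ with hkdef
  have habs : ∀ (i : Fin n) (θ : ℝ),
      ‖(starRingEnd ℂ) (μ i) * Complex.exp (θ * I)‖ < 1 := by
    intro i θ; rw [norm_mul, Complex.norm_conj, abs_exp_theta, mul_one]; exact hμ i
  have hecont : Continuous fun θ : ℝ => Complex.exp (θ * I) :=
    Complex.continuous_exp.comp (Complex.continuous_ofReal.mul continuous_const)
  have hkc : ∀ i, Continuous (k i) := fun i =>
    (continuous_const.sub (continuous_const.mul hecont)).inv₀ fun θ => one_sub_ne (habs i θ)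
  have hconjk : ∀ (j : Fin n) (θ : ℝ),
      (starRingEnd ℂ) (k j θ) = ((1:ℂ) - μ j * Complex.exp (-(θ * I)))⁻¹ := by
    intro j θ
    simp only [hkdef, map_inv₀, map_sub, map_one, map_mul, Complex.conj_conj, conj_exp_theta]
  have hI1 : ∀ i j, (∫ θ in (0:ℝ)..(2*Real.pi), k i θ * (starRingEnd ℂ) (k j θ))
      = 2*Real.pi * ((1:ℂ) - (starRingEnd ℂ) (μ i) * μ j)⁻¹ := by
    intro i j
    have h := cauchy_rep hR'1 (hkdiff i) (hμ j)
    rw [← h]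
    refine intervalIntegral.integral_congr fun θ _ => ?_
    rw [hconjk j θ]
  have hI2 : ∀ i j, (∫ θ in (0:ℝ)..(2*Real.pi),
        (f (Complex.exp (θ*I)) * k i θ) * (starRingEnd ℂ) (k j θ))
      = 2*Real.pi * (f (μ j) * ((1:ℂ) - (starRingEnd ℂ) (μ i) * μ j)⁻¹) := by
    intro i j
    have h := cauchy_rep hR'1 (hf'.mul (hkdiff i)) (hμ j)
    simp only [Pi.mul_apply] at h
    rw [← h]
    refine intervalIntegral.integral_congr fun θ _ => ?_
    rw [hconjk j θ]
  have hI3 : ∀ i j, (∫ θ in (0:ℝ)..(2*Real.pi),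
        ((starRingEnd ℂ) (f (Complex.exp (θ*I))) * k i θ) * (starRingEnd ℂ) (k j θ))
      = 2*Real.pi * ((starRingEnd ℂ) (f (μ i)) * ((1:ℂ) - (starRingEnd ℂ) (μ i) * μ j)⁻¹) := by
    intro i j
    have h2 : (∫ θ in (0:ℝ)..(2*Real.pi),
        ((starRingEnd ℂ) (f (Complex.exp (θ*I))) * k i θ) * (starRingEnd ℂ) (k j θ))
        = (starRingEnd ℂ) (∫ θ in (0:ℝ)..(2*Real.pi),
            (f (Complex.exp (θ*I)) * k j θ) * (starRingEnd ℂ) (k i θ)) := by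
      rw [← _root_.intervalIntegral_conj]
      refine intervalIntegral.integral_congr fun θ _ => ?_
      simp only [map_mul, Complex.conj_conj]
      ring
    rw [h2, hI2 j i]
    simp only [map_mul, map_inv₀, map_sub, map_one, Complex.conj_conj, map_ofNat,
      Complex.conj_ofReal]
    ring_nf
  -- coefficient vectors
  set φs : Fin n → ℂ := fun i => (starRingEnd ℂ) (c i) with hφs
  set ψf : Fin n → ℂ := fun i => (starRingEnd ℂ) (c i) * (starRingEnd ℂ) (f (μ i)) with hψf
  set Qs : ℂ := ∑ i, ∑ j, (starRingEnd ℂ) (c i) * c j *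
      ((1:ℂ) - (starRingEnd ℂ) (μ i) * μ j)⁻¹ with hQs
  set Qf : ℂ := ∑ i, ∑ j, (starRingEnd ℂ) (c i) * c j *
      ((starRingEnd ℂ) (f (μ i)) * f (μ j) * ((1:ℂ) - (starRingEnd ℂ) (μ i) * μ j)⁻¹) with hQf
  have E1 : (∫ θ in (0:ℝ)..(2*Real.pi),
      (∑ i, φs i * k i θ) * (starRingEnd ℂ) (∑ j, φs j * k j θ)) = 2*Real.pi * Qs := by
    have h := expand k hkc (fun _ => (1:ℂ)) continuous_const φs φs
    simp only [one_mul] at h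
    rw [h, hQs, Finset.mul_sum]
    refine Finset.sum_congr rfl fun i _ => ?_
    rw [Finset.mul_sum]
    refine Finset.sum_congr rfl fun j _ => ?_
    rw [hI1 i j]
    simp only [hφs, Complex.conj_conj]
    ring
  have E2 : (∫ θ in (0:ℝ)..(2*Real.pi),
      (∑ i, ψf i * k i θ) * (starRingEnd ℂ) (∑ j, ψf j * k j θ)) = 2*Real.pi * Qf := by
    have h := expand k hkc (fun _ => (1:ℂ)) continuous_const ψf ψf
    simp only [one_mul] at h
    rw [h, hQf, Finset.mul_sum]
    refine Finset.sum_congr rfl fun i _ => ?_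
    rw [Finset.mul_sum]
    refine Finset.sum_congr rfl fun j _ => ?_
    rw [hI1 i j]
    simp only [hψf, map_mul, Complex.conj_conj]
    ring
  have E3 : (∫ θ in (0:ℝ)..(2*Real.pi),
      ((starRingEnd ℂ) (f (Complex.exp (θ*I))) * ∑ i, φs i * k i θ) *
        (starRingEnd ℂ) (∑ j, ψf j * k j θ)) = 2*Real.pi * Qf := by
    have h := expand k hkc (fun θ => (starRingEnd ℂ) (f (Complex.exp (θ*I))))
      (Complex.continuous_conj.comp ((hf.continuousOn.mono
        (ball_subset_ball (min_le_left _ _))).comp_continuous hecont (fun θ => by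
          rw [mem_ball_zero_iff, abs_exp_theta]; exact hR'1))) φs ψf
    rw [h, hQf, Finset.mul_sum]
    refine Finset.sum_congr rfl fun i _ => ?_
    rw [Finset.mul_sum]
    refine Finset.sum_congr rfl fun j _ => ?_
    rw [hI3 i j]
    simp only [hφs, hψf, map_mul, Complex.conj_conj]
    ring
  -- continuity of the two circle functions
  have hUc : Continuous fun θ => ∑ i, φs i * k i θ :=
    continuous_finset_sum _ fun i _ => continuous_const.mul (hkc i)
  have hwc : Continuous fun θ => ∑ i, ψf i * k i θ :=
    continuous_finset_sum _ fun i _ => continuous_const.mul (hkc i)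
  have hGc : Continuous fun θ : ℝ => (starRingEnd ℂ) (f (Complex.exp (θ*I))) :=
    Complex.continuous_conj.comp ((hf.continuousOn.mono
      (ball_subset_ball (min_le_left _ _))).comp_continuous hecont (fun θ => by
        rw [mem_ball_zero_iff, abs_exp_theta]; exact hR'1))
  set a : ℝ := ∫ θ in (0:ℝ)..(2*Real.pi), Complex.normSq (∑ i, φs i * k i θ) with hadef
  set b : ℝ := ∫ θ in (0:ℝ)..(2*Real.pi), Complex.normSq (∑ i, ψf i * k i θ) with hbdef
  have haC : 2*Real.pi * Qs = ((a : ℝ) : ℂ) := by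
    rw [← E1, intervalIntegral.integral_congr
      (g := fun θ => ((Complex.normSq (∑ i, φs i * k i θ) : ℝ) : ℂ))
      (fun θ _ => (Complex.mul_conj _)), intervalIntegral.integral_ofReal]
  have hbC : 2*Real.pi * Qf = ((b : ℝ) : ℂ) := by
    rw [← E2, intervalIntegral.integral_congr
      (g := fun θ => ((Complex.normSq (∑ i, ψf i * k i θ) : ℝ) : ℂ))
      (fun θ _ => (Complex.mul_conj _)), intervalIntegral.integral_ofReal]
  have hb0 : 0 ≤ b := by
    rw [hbdef]
    exact intervalIntegral.integral_nonneg (by positivity)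
      (fun u _ => Complex.normSq_nonneg _)
  have ha0 : 0 ≤ a := by
    rw [hadef]
    exact intervalIntegral.integral_nonneg (by positivity)
      (fun u _ => Complex.normSq_nonneg _)
  -- the key inequality b ≤ a
  have hnormSq : ∀ z : ℂ, Complex.normSq z = ‖z‖^2 := fun z => by
    rw [Complex.normSq_eq_norm_sq]
  have hcont_cross : Continuous fun θ : ℝ =>
      ((starRingEnd ℂ) (f (Complex.exp (θ*I))) * ∑ i, φs i * k i θ) *
        (starRingEnd ℂ) (∑ j, ψf j * k j θ) :=
    (hGc.mul hUc).mul (Complex.continuous_conj.comp hwc)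
  have hint1 : IntervalIntegrable (fun θ : ℝ =>
      ‖((starRingEnd ℂ) (f (Complex.exp (θ*I))) * ∑ i, φs i * k i θ) *
        (starRingEnd ℂ) (∑ j, ψf j * k j θ)‖) MeasureTheory.volume 0 (2*Real.pi) :=
    hcont_cross.norm.intervalIntegrable _ _
  have hint2 : IntervalIntegrable (fun θ : ℝ =>
      (Complex.normSq (∑ i, φs i * k i θ) + Complex.normSq (∑ i, ψf i * k i θ))/2)
      MeasureTheory.volume 0 (2*Real.pi) :=
    (((Complex.continuous_normSq.comp hUc).add
      (Complex.continuous_normSq.comp hwc)).div_const 2).intervalIntegrable _ _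
  have hint3 : IntervalIntegrable (fun θ : ℝ => Complex.normSq (∑ i, φs i * k i θ))
      MeasureTheory.volume 0 (2*Real.pi) :=
    (Complex.continuous_normSq.comp hUc).intervalIntegrable _ _
  have hint4 : IntervalIntegrable (fun θ : ℝ => Complex.normSq (∑ i, ψf i * k i θ))
      MeasureTheory.volume 0 (2*Real.pi) :=
    (Complex.continuous_normSq.comp hwc).intervalIntegrable _ _
  have hba : b ≤ a := by
    have step1 : b = ‖((b:ℝ):ℂ)‖ := by
      rw [Complex.norm_real, Real.norm_eq_abs, _root_.abs_of_nonneg hb0]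
    have step2 : b ≤ ∫ θ in (0:ℝ)..(2*Real.pi),
        ‖((starRingEnd ℂ) (f (Complex.exp (θ*I))) * ∑ i, φs i * k i θ) *
          (starRingEnd ℂ) (∑ j, ψf j * k j θ)‖ := by
      rw [step1, ← hbC, ← E3]
      exact intervalIntegral.norm_integral_le_integral_norm (by positivity)
    have step3 : (∫ θ in (0:ℝ)..(2*Real.pi),
        ‖((starRingEnd ℂ) (f (Complex.exp (θ*I))) * ∑ i, φs i * k i θ) *
          (starRingEnd ℂ) (∑ j, ψf j * k j θ)‖)
        ≤ ∫ θ in (0:ℝ)..(2*Real.pi),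
          (Complex.normSq (∑ i, φs i * k i θ) + Complex.normSq (∑ i, ψf i * k i θ))/2 := by
      refine intervalIntegral.integral_mono_on (by positivity) hint1 hint2 fun θ _ => ?_
      rw [norm_mul, norm_mul, RCLike.norm_conj, RCLike.norm_conj]
      have hf1 : ‖f (Complex.exp (θ*I))‖ ≤ 1 := by
        refine hle _ ?_
        rw [mem_ball_zero_iff, abs_exp_theta]; exact hR
      rw [hnormSq, hnormSq]
      nlinarith [sq_nonneg (‖∑ i, φs i * k i θ‖ - ‖∑ i, ψf i * k i θ‖),
        norm_nonneg (∑ i, φs i * k i θ), norm_nonneg (∑ i, ψf i * k i θ),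
        norm_nonneg (f (Complex.exp (θ*I))),
        mul_nonneg (norm_nonneg (∑ i, φs i * k i θ)) (norm_nonneg (∑ i, ψf i * k i θ))]
    have step4 : (∫ θ in (0:ℝ)..(2*Real.pi),
        (Complex.normSq (∑ i, φs i * k i θ) + Complex.normSq (∑ i, ψf i * k i θ))/2)
        = (a + b)/2 := by
      rw [intervalIntegral.integral_div, intervalIntegral.integral_add hint3 hint4,
        hadef, hbdef]
    linarith [step2.trans (step3.trans_eq step4)]
  -- conclude
  have hT : (∑ i, ∑ j, (starRingEnd ℂ) (c i) * c j *
      ((1 - (starRingEnd ℂ) (f (μ i)) * f (μ j)) * (1 - (starRingEnd ℂ) (μ i) * μ j)⁻¹))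
      = Qs - Qf := by
    rw [hQs, hQf, ← Finset.sum_sub_distrib]
    refine Finset.sum_congr rfl fun i _ => ?_
    rw [← Finset.sum_sub_distrib]
    refine Finset.sum_congr rfl fun j _ => ?_
    ring
  rw [hT]
  have h2c : ((2:ℂ) * (Real.pi:ℂ)) ≠ 0 := by
    have : (2*Real.pi:ℝ) ≠ 0 := by positivity
    exact_mod_cast this
  have hfinal : Qs - Qf = (((a - b)/(2*Real.pi) : ℝ) : ℂ) := by
    apply mul_left_cancel₀ h2c
    rw [mul_sub, haC, hbC]
    push_cast
    field_simp
  rw [hfinal]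
  rw [Complex.zero_le_real]
  exact div_nonneg (by linarith) (by positivity)
  

lemma keyD {f : ℂ → ℂ} (hf : DifferentiableOn ℂ f (ball (0:ℂ) 1))
    (hle : ∀ lam ∈ ball (0:ℂ) 1, ‖f lam‖ ≤ 1)
    {n : ℕ} (lam : Fin n → ℂ) (hlam : ∀ i, ‖lam i‖ < 1) (c : Fin n → ℂ) :
    0 ≤ ∑ i, ∑ j, (starRingEnd ℂ) (c i) * c j *
      ((1 - (starRingEnd ℂ) (f (lam i)) * f (lam j)) *
        (1 - (starRingEnd ℂ) (lam i) * lam j)⁻¹) := by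
  rcases Nat.eq_zero_or_pos n with hn | hn
  · subst hn; simp
  haveI : NeZero n := ⟨hn.ne'⟩
  set ρ : ℝ := Finset.univ.sup' Finset.univ_nonempty (fun i => ‖lam i‖) with hρdef
  have hρ1 : ρ < 1 := (Finset.sup'_lt_iff _).mpr fun i _ => hlam i
  have hρi : ∀ i, ‖lam i‖ ≤ ρ :=
    fun i => Finset.le_sup' (fun i => ‖lam i‖) (Finset.mem_univ i)
  have hρ0 : 0 ≤ ρ := le_trans (norm_nonneg _) (hρi ⟨0, hn⟩)
  set G : ℝ → ℂ := fun r => ∑ i, ∑ j, (starRingEnd ℂ) (c i) * c j *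
      ((1 - (starRingEnd ℂ) (f (lam i)) * f (lam j)) *
        (1 - (starRingEnd ℂ) (lam i) * lam j / ((r:ℂ))^2)⁻¹) with hGdef
  have hev : ∀ r ∈ Set.Ioo ρ 1, 0 ≤ G r := by
    intro r hr
    have hr0 : 0 < r := lt_of_le_of_lt hρ0 hr.1
    have hrC : ((r:ℂ)) ≠ 0 := by exact_mod_cast hr0.ne'
    have hR1 : 1 < 1/r := (one_lt_one_div hr0 hr.2)
    have hmaps : ∀ z ∈ ball (0:ℂ) (1/r), (r:ℂ) * z ∈ ball (0:ℂ) 1 := by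
      intro z hz
      rw [mem_ball_zero_iff] at hz ⊢
      rw [norm_mul, Complex.norm_real, Real.norm_eq_abs, _root_.abs_of_nonneg hr0.le]
      calc r * ‖z‖ < r * (1/r) := by
            exact mul_lt_mul_of_pos_left hz hr0
        _ = 1 := by field_simp
    have hfr : DifferentiableOn ℂ (fun z => f ((r:ℂ) * z)) (ball 0 (1/r)) := by
      apply DifferentiableOn.comp hf
        ((differentiable_id.const_mul ((r:ℂ))).differentiableOn)
      exact hmaps
    have hler : ∀ z ∈ ball (0:ℂ) (1/r), ‖f ((r:ℂ) * z)‖ ≤ 1 :=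
      fun z hz => hle _ (hmaps z hz)
    have hμ : ∀ i, ‖lam i / (r:ℂ)‖ < 1 := by
      intro i
      rw [norm_div]
      have : ‖(r:ℂ)‖ = r := by
        rw [Complex.norm_real, Real.norm_eq_abs, _root_.abs_of_nonneg hr0.le]
      rw [this, div_lt_one hr0]
      exact lt_of_le_of_lt (hρi i) hr.1
    have h0 := lemA hR1 hfr hler (fun i => lam i / (r:ℂ)) hμ c
    refine le_of_le_of_eq h0 ?_
    refine Finset.sum_congr rfl fun i _ => Finset.sum_congr rfl fun j _ => ?_
    have hv : ∀ i : Fin n, (r:ℂ) * (lam i / (r:ℂ)) = lam i := fun i => by field_simp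
    rw [hv i, hv j]
    have hden : (starRingEnd ℂ) (lam i / (r:ℂ)) * (lam j / (r:ℂ))
        = (starRingEnd ℂ) (lam i) * lam j / ((r:ℂ))^2 := by
      rw [map_div₀, Complex.conj_ofReal, div_mul_div_comm, ← sq]
    rw [hden]
  -- limit of G as r → 1⁻
  have hTlim : Filter.Tendsto G (nhdsWithin 1 (Set.Iio 1)) (nhds
      (∑ i, ∑ j, (starRingEnd ℂ) (c i) * c j *
        ((1 - (starRingEnd ℂ) (f (lam i)) * f (lam j)) *
          (1 - (starRingEnd ℂ) (lam i) * lam j)⁻¹))) := by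
    rw [hGdef]
    apply tendsto_finset_sum
    intro i _
    apply tendsto_finset_sum
    intro j _
    have hbase : Filter.Tendsto (fun r : ℝ => ((r:ℂ))) (nhdsWithin 1 (Set.Iio 1))
        (nhds 1) := by
      have := (Complex.continuous_ofReal.tendsto 1)
      simpa using this.mono_left nhdsWithin_le_nhds
    have hne : (1:ℂ) - (starRingEnd ℂ) (lam i) * lam j ≠ 0 := by
      apply one_sub_ne
      rw [norm_mul, Complex.norm_conj]
      nlinarith [hlam i, hlam j, norm_nonneg (lam i), norm_nonneg (lam j)]
    have hden : Filter.Tendsto (fun r : ℝ => (1:ℂ) - (starRingEnd ℂ) (lam i) * lam j / ((r:ℂ))^2)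
        (nhdsWithin 1 (Set.Iio 1)) (nhds ((1:ℂ) - (starRingEnd ℂ) (lam i) * lam j)) := by
      have h2 : Filter.Tendsto (fun r : ℝ => (starRingEnd ℂ) (lam i) * lam j / ((r:ℂ))^2)
          (nhdsWithin 1 (Set.Iio 1)) (nhds ((starRingEnd ℂ) (lam i) * lam j)) := by
        have := (tendsto_const_nhds (x := (starRingEnd ℂ) (lam i) * lam j)
            (f := nhdsWithin (1:ℝ) (Set.Iio 1))).div (hbase.pow 2) (by norm_num)
        simpa [Pi.div_def] using this
      have := (tendsto_const_nhds (x := (1:ℂ)) (f := nhdsWithin (1:ℝ) (Set.Iio 1))).sub h2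
      simpa using this
    exact tendsto_const_nhds.mul (tendsto_const_nhds.mul (hden.inv₀ hne))
  have hmem : Set.Ioo ρ 1 ∈ nhdsWithin (1:ℝ) (Set.Iio 1) :=
    Ioo_mem_nhdsLT_of_mem ⟨hρ1, le_refl 1⟩
  set T : ℂ := ∑ i, ∑ j, (starRingEnd ℂ) (c i) * c j *
      ((1 - (starRingEnd ℂ) (f (lam i)) * f (lam j)) *
        (1 - (starRingEnd ℂ) (lam i) * lam j)⁻¹) with hT
  have hre : (0:ℝ) ≤ T.re := by
    have h1 : Filter.Tendsto (fun r => (G r).re) (nhdsWithin 1 (Set.Iio 1)) (nhds T.re) :=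
      (Complex.continuous_re.tendsto T).comp hTlim
    refine ge_of_tendsto h1 ?_
    filter_upwards [hmem] with r hr
    exact (Complex.le_def.mp (hev r hr)).1
  have him : T.im = 0 := by
    have h1 : Filter.Tendsto (fun r => (G r).im) (nhdsWithin 1 (Set.Iio 1)) (nhds T.im) :=
      (Complex.continuous_im.tendsto T).comp hTlim
    have h2 : Filter.Tendsto (fun r => (G r).im) (nhdsWithin 1 (Set.Iio 1)) (nhds 0) := by
      apply Filter.Tendsto.congr' _ (tendsto_const_nhds (x := (0:ℝ)))
      filter_upwards [hmem] with r hr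
      have := (Complex.le_def.mp (hev r hr)).2
      simpa using this
    exact tendsto_nhds_unique h1 h2
  rw [Complex.le_def]
  constructor
  · simpa using hre
  · simp [him]

noncomputable def SchurQF {n : ℕ} (M : Fin n → Fin n → ℂ) (c : Fin n → ℂ) : ℂ :=
  ∑ i, ∑ j, (starRingEnd ℂ) (c i) * c j * M i j

def SchurPSD {n : ℕ} (M : Fin n → Fin n → ℂ) : Prop :=
  (∀ i j, (starRingEnd ℂ) (M i j) = M j i) ∧ ∀ c, 0 ≤ SchurQF M c

lemma SchurPSD.add {n : ℕ} {M N : Fin n → Fin n → ℂ} (hM : SchurPSD M) (hN : SchurPSD N) :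
    SchurPSD (fun i j => M i j + N i j) := by
  refine ⟨fun i j => by rw [map_add, hM.1, hN.1], fun c => ?_⟩
  have h : SchurQF (fun i j => M i j + N i j) c = SchurQF M c + SchurQF N c := by
    unfold SchurQF
    rw [← Finset.sum_add_distrib]
    refine Finset.sum_congr rfl fun i _ => ?_
    rw [← Finset.sum_add_distrib]
    refine Finset.sum_congr rfl fun j _ => ?_
    ring
  rw [h]
  exact add_nonneg (hM.2 c) (hN.2 c)

open scoped MatrixOrder in
lemma psd_gram {n : ℕ} {A : Matrix (Fin n) (Fin n) ℂ} (hA : A.PosSemidef) :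
    ∃ B : Matrix (Fin n) (Fin n) ℂ, A = B.conjTranspose * B := by
  obtain ⟨B, hB⟩ := CStarAlgebra.nonneg_iff_eq_star_mul_self.mp hA.nonneg
  exact ⟨B, by rw [hB, Matrix.star_eq_conjTranspose]⟩

open Matrix in
lemma SchurPSD.mul {n : ℕ} {M N : Fin n → Fin n → ℂ} (hM : SchurPSD M) (hN : SchurPSD N) :
    SchurPSD (fun i j => M i j * N i j) := by
  refine ⟨fun i j => by simp only []; rw [_root_.map_mul, hM.1, hN.1], fun c => ?_⟩
  -- get a Gram representation of M
  have hA : (Matrix.of M).PosSemidef := by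
    refine Matrix.PosSemidef.of_dotProduct_mulVec_nonneg ?_ ?_
    · ext i j
      rw [Matrix.conjTranspose_apply]
      exact hM.1 j i
    · intro x
      have h : star x ⬝ᵥ (Matrix.of M *ᵥ x) = SchurQF M x := by
        unfold SchurQF
        simp only [dotProduct, Matrix.mulVec, Pi.star_apply, Matrix.of_apply,
          Finset.mul_sum]
        refine Finset.sum_congr rfl fun i _ => Finset.sum_congr rfl fun j _ => ?_
        rw [RCLike.star_def]
        ring
      rw [h]
      exact hM.2 x
  obtain ⟨B, hB⟩ := psd_gram hA
  have hentry : ∀ i j, M i j = ∑ l, (starRingEnd ℂ) (B l i) * B l j := by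
    intro i j
    have h := congrFun (congrFun hB i) j
    simp only [Matrix.of_apply, Matrix.mul_apply, Matrix.conjTranspose_apply,
      RCLike.star_def] at h
    exact h
  have key : SchurQF (fun i j => M i j * N i j) c
      = ∑ l, SchurQF N (fun i => B l i * c i) := by
    unfold SchurQF
    have h1 : ∀ i j : Fin n, (starRingEnd ℂ) (c i) * c j * (M i j * N i j)
        = ∑ l, (starRingEnd ℂ) (B l i * c i) * (B l j * c j) * N i j := by
      intro i j
      rw [hentry i j, Finset.sum_mul, Finset.mul_sum]
      refine Finset.sum_congr rfl fun l _ => ?_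
      rw [_root_.map_mul]
      ring
    calc (∑ i, ∑ j, (starRingEnd ℂ) (c i) * c j * (M i j * N i j))
        = ∑ i, ∑ j, ∑ l, (starRingEnd ℂ) (B l i * c i) * (B l j * c j) * N i j := by
          exact Finset.sum_congr rfl fun i _ => Finset.sum_congr rfl fun j _ => h1 i j
      _ = ∑ i, ∑ l, ∑ j, (starRingEnd ℂ) (B l i * c i) * (B l j * c j) * N i j := by
          exact Finset.sum_congr rfl fun i _ => Finset.sum_comm
      _ = ∑ l, ∑ i, ∑ j, (starRingEnd ℂ) (B l i * c i) * (B l j * c j) * N i j :=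
          Finset.sum_comm
  rw [key]
  exact Finset.sum_nonneg fun l _ => hN.2 _

/-- If `f` is bounded holomorphic with `|f| ≤ 1` on the disk, then both kernels
`K₁` and `K₂` are positive semi-definite. -/
theorem psd_pair_of_schur_class
    (f : ℂ → ℂ) (hf : DifferentiableOn ℂ f (ball (0 : ℂ) 1))
    (hle : ∀ lam ∈ ball (0 : ℂ) 1, ‖f lam‖ ≤ 1) :
    IsPSDKernelOnDisk (fun lam z =>
        (2 * (starRingEnd ℂ) (f lam) * f z - ((starRingEnd ℂ) (f lam)) ^ 2 * (f z) ^ 2) /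
          (1 - (starRingEnd ℂ) lam * z) ^ 2) ∧
      IsPSDKernelOnDisk (fun lam z =>
        (1 - 2 * (starRingEnd ℂ) (f lam) * f z + ((starRingEnd ℂ) (f lam)) ^ 2 * (f z) ^ 2) /
          (1 - (starRingEnd ℂ) lam * z) ^ 2) := by
  have main : ∀ (n : ℕ) (lam : Fin n → ℂ), (∀ i, ‖lam i‖ < 1) →
      ∀ c : Fin n → ℂ,
      SchurPSD (fun i j : Fin n => ((1:ℂ) - (starRingEnd ℂ) (lam i) * lam j)⁻¹) ∧
      SchurPSD (fun i j : Fin n => ((1:ℂ) - (starRingEnd ℂ) (f (lam i)) * f (lam j)) *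
        ((1:ℂ) - (starRingEnd ℂ) (lam i) * lam j)⁻¹) ∧
      SchurPSD (fun i j : Fin n => (starRingEnd ℂ) (f (lam i)) * f (lam j)) := by
    intro n lam hlam c
    refine ⟨⟨?_, ?_⟩, ⟨?_, ?_⟩, ⟨?_, ?_⟩⟩
    · intro i j
      simp only [map_inv₀, map_sub, _root_.map_one, _root_.map_mul, Complex.conj_conj]
      rw [mul_comm]
    · intro d
      have h := keyD (f := fun _ => (0:ℂ)) (differentiableOn_const 0)
        (by intro z _; simp) lam hlam d
      simp only [map_zero, zero_mul, mul_zero, sub_zero, one_mul] at h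
      unfold SchurQF
      exact h
    · intro i j
      simp only [map_inv₀, map_sub, _root_.map_one, _root_.map_mul, Complex.conj_conj]
      ring
    · intro d
      have h := keyD hf hle lam hlam d
      unfold SchurQF
      exact h
    · intro i j
      simp only [_root_.map_mul, Complex.conj_conj]
      ring
    · intro d
      have hs : SchurQF (fun i j : Fin n => (starRingEnd ℂ) (f (lam i)) * f (lam j)) d
          = (starRingEnd ℂ) (∑ i, d i * f (lam i)) * (∑ j, d j * f (lam j)) := by
        unfold SchurQF
        rw [map_sum, Finset.sum_mul_sum]
        refine Finset.sum_congr rfl fun i _ => Finset.sum_congr rfl fun j _ => ?_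
        rw [_root_.map_mul]
        ring
      rw [hs, ← RCLike.star_def]
      exact star_mul_self_nonneg _
  have hden : ∀ (n : ℕ) (lam : Fin n → ℂ), (∀ i, ‖lam i‖ < 1) →
      ∀ i j, ((1:ℂ) - (starRingEnd ℂ) (lam i) * lam j) ≠ 0 := by
    intro n lam hlam i j
    apply one_sub_ne
    rw [norm_mul, Complex.norm_conj]
    nlinarith [hlam i, hlam j, norm_nonneg (lam i), norm_nonneg (lam j)]
  constructor
  · intro n lam hlam c
    obtain ⟨hS, hD, hF⟩ := main n lam hlam c
    have h := ((hF.mul hS).mul (hS.add hD)).2 c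
    refine le_of_le_of_eq h ?_
    unfold SchurQF
    refine Finset.sum_congr rfl fun i _ => Finset.sum_congr rfl fun j _ => ?_
    simp only []
    congr 1
    field_simp [hden n lam hlam i j]
    ring
  · intro n lam hlam c
    obtain ⟨hS, hD, hF⟩ := main n lam hlam c
    have h := (hD.mul hD).2 c
    refine le_of_le_of_eq h ?_
    unfold SchurQF
    refine Finset.sum_congr rfl fun i _ => Finset.sum_congr rfl fun j _ => ?_
    simp only []
    congr 1
    field_simp [hden n lam hlam i j]
    ring
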